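/- Let n ≥ 1. For every integer j ≥ 0 and every μ ∈ ℤ^{n+1}, the unrestricted one-dimensional sum of the level-1 perfect crystal of type A_n^{(1)} satisfies, in ℤ[q,q^{−1}], q^{d+1} · g_j(n, μ) + q^{j+d+2} · g_j(0, μ + e_n − e_0) = g_j(n, μ + (d+1)·(e_0 − e_n)) + q^{j+1} · g_j(0, μ + d·(e_0 − e_n)), where d := μ_n − μ_0. (This is the case m = 1 of the Weyl-reflection identity for the affine index i = 0 and the element b = n with φ_0(n) = 1, f_0(n) = 0; the powers of q account for the imaginary-root parts of the weight shifts.) -/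

import Mathlib

open Finset

noncomputable section

/-- The indeterminate `q`, living in the field of rational functions `ℚ(q)`. -/
def q : RatFunc ℚ := RatFunc.X

/-- Energy function of the level-1 perfect crystal `B = {0,…,n}` of type `A_n^{(1)}`. -/
def H (n : ℕ) (b b' : Fin (n + 1)) : ℤ := if b' ≤ b then 1 else 0

/-- The unrestricted one-dimensional sum `g_j(b,μ)`. -/
def g (n j : ℕ) (b : Fin (n + 1)) (μ : Fin (n + 1) → ℤ) : RatFunc ℚ :=
  ∑ p ∈ Finset.univ.filter (fun p : Fin (j + 1) → Fin (n + 1) =>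
      p (Fin.last j) = b ∧
      ∀ k, ((Finset.univ.filter (fun i : Fin j => p i.castSucc = k)).card : ℤ) = μ k),
    q ^ (∑ i : Fin j, ((i : ℤ) + 1) * H n (p i.succ) (p i.castSucc))

/-- The standard basis vector `e_b` of `ℤ^{n+1}`. -/
def e (n : ℕ) (b : Fin (n + 1)) : Fin (n + 1) → ℤ := fun k => if k = b then 1 else 0
namespace S10

lemma q_ne_zero : q ≠ 0 := RatFunc.X_ne_zero

lemma q_pow_ne_one (m : ℕ) (hm : m ≠ 0) : q ^ m ≠ 1 := by
  intro h
  have h2 : (algebraMap (Polynomial ℚ) (RatFunc ℚ)) (Polynomial.X ^ m) =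
      (algebraMap (Polynomial ℚ) (RatFunc ℚ)) 1 := by
    simpa [q, RatFunc.algebraMap_X] using h
  have h3 := RatFunc.algebraMap_injective ℚ h2
  have := congrArg Polynomial.natDegree h3
  simp [Polynomial.natDegree_X_pow] at this
  exact hm this

lemma q_sub_one_ne_zero : q - 1 ≠ 0 := by
  intro h
  exact q_pow_ne_one 1 one_ne_zero (by rw [pow_one]; linear_combination h)

/-- the q-integer [m]_q -/
def qn (m : ℕ) : RatFunc ℚ := ∑ i ∈ Finset.range m, q ^ i

lemma qn_mul (m : ℕ) : qn m * (q - 1) = q ^ m - 1 := geom_sum_mul q m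

lemma qn_ne_zero (m : ℕ) (hm : m ≠ 0) : qn m ≠ 0 := by
  intro h
  have := qn_mul m
  rw [h, zero_mul] at this
  exact q_pow_ne_one m hm (by linear_combination -this)

/-- the q-factorial [m]_q! -/
def qfac : ℕ → RatFunc ℚ
  | 0 => 1
  | m + 1 => qfac m * qn (m + 1)

lemma qfac_ne_zero : ∀ m, qfac m ≠ 0
  | 0 => one_ne_zero
  | m + 1 => mul_ne_zero (qfac_ne_zero m) (qn_ne_zero (m + 1) m.succ_ne_zero)

/-- binom(m,2) for integers -/
def f (m : ℤ) : ℤ := m * (m - 1) / 2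

lemma f_sub_one (m : ℤ) : f m = f (m - 1) + (m - 1) := by
  have h1 : Even (m * (m - 1)) := by
    have := Int.even_mul_succ_self (m - 1); simpa [mul_comm] using this
  have h2 : Even ((m - 1) * (m - 1 - 1)) := by
    have := Int.even_mul_succ_self (m - 1 - 1)
    have h3 : (m - 1 - 1) * (m - 1 - 1 + 1) = (m - 1) * (m - 1 - 1) := by ring
    rwa [h3] at this
  have e1 : m * (m - 1) = (m - 1) * (m - 1 - 1) + 2 * (m - 1) := by ring
  unfold f
  omega

def cE (n : ℕ) (μ : Fin (n + 1) → ℤ) : ℤ := ∑ k, f (μ k)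

lemma cE_sub_e (n : ℕ) (t : Fin (n+1)) (μ : Fin (n + 1) → ℤ) :
    cE n (μ - e n t) = cE n μ - (μ t - 1) := by
  unfold cE
  have h : ∀ k, f ((μ - e n t) k) = f (μ k) - (if k = t then μ t - 1 else 0) := by
    intro k
    by_cases h : k = t
    · subst h
      have h4 : (μ - e n k) k = μ k - 1 := by simp [e]
      rw [h4, if_pos rfl]
      have := f_sub_one (μ k); omega
    · simp [e, h]
  rw [Finset.sum_congr rfl (fun k _ => h k), Finset.sum_sub_distrib,
    Finset.sum_ite_eq' univ t (fun _ => μ t - 1)]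
  simp

lemma cE_add_e (n : ℕ) (t : Fin (n+1)) (μ : Fin (n + 1) → ℤ) :
    cE n (μ + e n t) = cE n μ + μ t := by
  have h := cE_sub_e n t (μ + e n t)
  have h2 : μ + e n t - e n t = μ := by ext k; simp
  rw [h2] at h
  have h3 : (μ + e n t) t = μ t + 1 := by simp [e]
  omega

lemma cE_comp_perm (n : ℕ) (σ : Equiv.Perm (Fin (n+1))) (μ : Fin (n + 1) → ℤ) :
    cE n (μ ∘ σ) = cE n μ := Equiv.sum_comp σ (fun k => f (μ k))

/-- The q-multinomial coefficient, `0` for invalid contents. -/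
def Q (n j : ℕ) (μ : Fin (n + 1) → ℤ) : RatFunc ℚ :=
  if (∀ k, 0 ≤ μ k) ∧ (∑ k, μ k) = j then qfac j / ∏ k, qfac (μ k).toNat else 0

lemma Q_comp_perm (n j : ℕ) (σ : Equiv.Perm (Fin (n+1))) (μ : Fin (n + 1) → ℤ) :
    Q n j (μ ∘ σ) = Q n j μ := by
  unfold Q
  simp only [Function.comp_apply]
  rw [Equiv.sum_comp σ (fun k => μ k), Equiv.prod_comp σ (fun k => qfac (μ k).toNat)]
  congr 1
  simp only [eq_iff_iff, and_congr_left_iff]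
  intro _
  exact ⟨fun h k => by simpa using h (σ.symm k), fun h k => h (σ k)⟩

lemma q_zpow_of_nonneg (m : ℤ) (hm : 0 ≤ m) : q ^ m = q ^ m.toNat := by
  rw [← zpow_natCast, Int.toNat_of_nonneg hm]

lemma sum_e (n : ℕ) (t : Fin (n+1)) : ∑ k, e n t k = 1 := by
  simp [e, Finset.sum_ite_eq' univ t (fun _ => (1:ℤ))]

lemma count_split (n j : ℕ) (p₀ : Fin (j + 1) → Fin (n + 1)) (k' : Fin (n + 1)) :
    ((univ.filter (fun i : Fin (j + 1) => p₀ i = k')).card : ℤ)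
      = ((univ.filter (fun i : Fin j => p₀ i.castSucc = k')).card : ℤ)
        + (if p₀ (Fin.last j) = k' then 1 else 0) := by
  have h1 : (univ.filter (fun i : Fin (j+1) => p₀ i = k')).card
      = ∑ i : Fin (j+1), (if p₀ i = k' then (1:ℕ) else 0) := Finset.card_filter _ _
  have h2 : (univ.filter (fun i : Fin j => p₀ i.castSucc = k')).card
      = ∑ i : Fin j, (if p₀ i.castSucc = k' then (1:ℕ) else 0) := Finset.card_filter _ _
  rw [h1, h2, Fin.sum_univ_castSucc (f := fun i => if p₀ i = k' then (1:ℕ) else 0)]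
  push_cast
  split <;> simp

lemma g_succ (n j : ℕ) (b : Fin (n + 1)) (μ : Fin (n + 1) → ℤ) :
    g n (j + 1) b μ = ∑ k, q ^ (((j : ℤ) + 1) * H n b k) * g n j k (μ - e n k) := by
  classical
  set B : Finset (Fin (j + 1) → Fin (n + 1)) :=
    univ.filter (fun p₀ => ∀ k', ((univ.filter (fun i : Fin (j+1) => p₀ i = k')).card : ℤ) = μ k') with hB
  have hrhs : ∀ k : Fin (n + 1), q ^ (((j : ℤ) + 1) * H n b k) * g n j k (μ - e n k)
      = ∑ p₀ ∈ B.filter (fun p₀ => p₀ (Fin.last j) = k),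
          q ^ (((j : ℤ) + 1) * H n b (p₀ (Fin.last j))
            + ∑ i : Fin j, ((i : ℤ) + 1) * H n (p₀ i.succ) (p₀ i.castSucc)) := by
    intro k
    rw [g, Finset.mul_sum]
    have hset : (univ.filter (fun p₀ : Fin (j+1) → Fin (n+1) => p₀ (Fin.last j) = k ∧
        ∀ k', ((univ.filter (fun i : Fin j => p₀ i.castSucc = k')).card : ℤ) = (μ - e n k) k'))
        = B.filter (fun p₀ => p₀ (Fin.last j) = k) := by
      ext p₀
      simp only [hB, Finset.mem_filter, Finset.mem_univ, true_and]
      constructor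
      · rintro ⟨hlast, hcount⟩
        refine ⟨fun k' => ?_, hlast⟩
        rw [count_split, hcount k', hlast]
        simp [e, Pi.sub_apply, eq_comm]
      · rintro ⟨hcount, hlast⟩
        refine ⟨hlast, fun k' => ?_⟩
        have := count_split n j p₀ k'
        rw [hcount k', hlast] at this
        simp only [Pi.sub_apply, e]
        have h2 : (if k = k' then (1:ℤ) else 0) = (if k' = k then 1 else 0) := by
          simp [eq_comm]
        omega
    rw [hset]
    apply Finset.sum_congr rfl
    intro p₀ hp₀
    rw [Finset.mem_filter] at hp₀
    rw [hp₀.2, ← zpow_add₀ q_ne_zero]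
  rw [Finset.sum_congr rfl (fun k _ => hrhs k)]
  rw [show (∑ k : Fin (n+1), ∑ p₀ ∈ B.filter (fun p₀ => p₀ (Fin.last j) = k),
        q ^ (((j : ℤ) + 1) * H n b (p₀ (Fin.last j))
          + ∑ i : Fin j, ((i : ℤ) + 1) * H n (p₀ i.succ) (p₀ i.castSucc)))
      = ∑ p₀ ∈ B, q ^ (((j : ℤ) + 1) * H n b (p₀ (Fin.last j))
          + ∑ i : Fin j, ((i : ℤ) + 1) * H n (p₀ i.succ) (p₀ i.castSucc)) from
    Finset.sum_fiberwise_of_maps_to (fun _ _ => Finset.mem_univ _) _]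
  rw [g]
  apply Finset.sum_nbij' (i := fun p => p ∘ Fin.castSucc) (j := fun p₀ => Fin.snoc p₀ b)
  · intro p hp
    rw [Finset.mem_filter] at hp ⊢
    exact ⟨Finset.mem_univ _, fun k' => hp.2.2 k'⟩
  · intro p₀ hp₀
    rw [Finset.mem_filter] at hp₀ ⊢
    refine ⟨Finset.mem_univ _, by simp, fun k' => ?_⟩
    have hsc : ∀ i : Fin (j+1), (Fin.snoc p₀ b : Fin (j+2) → Fin (n+1)) i.castSucc = p₀ i := by
      intro i; simp
    simp only [hsc]
    exact hp₀.2 k'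
  · intro p hp
    rw [Finset.mem_filter] at hp
    funext i
    refine Fin.lastCases ?_ (fun i => ?_) i
    · rw [Fin.snoc_last, hp.2.1]
    · rw [Fin.snoc_castSucc]; rfl
  · intro p₀ _
    funext i
    simp
  · intro p hp
    rw [Finset.mem_filter] at hp
    congr 1
    rw [Fin.sum_univ_castSucc (f := fun i : Fin (j+1) => ((i : ℤ) + 1) * H n (p i.succ) (p i.castSucc))]
    have h1 : p (Fin.last j).succ = b := by rw [Fin.succ_last]; exact hp.2.1
    have h2 : ∀ i : Fin j, p i.castSucc.succ = p i.succ.castSucc := by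
      intro i; rw [Fin.succ_castSucc]
    simp only [Function.comp_apply, Fin.coe_castSucc, Fin.val_last, h1, h2]
    ring

lemma telescope (n m : ℕ) (b : Fin (n+1)) (μ : Fin (n+1) → ℤ)
    (hsum : ∑ k, μ k = (m : ℤ)) :
    ∑ k, q ^ ((m : ℤ) * H n b k + ∑ l ∈ univ.filter (fun l => l < k), μ l) * (q ^ (μ k) - 1)
      = q ^ (∑ l ∈ univ.filter (fun l => l ≤ b), μ l) * (q ^ (m : ℤ) - 1) := by
  classical
  set P : ℕ → ℤ := fun t => ∑ l ∈ univ.filter (fun l : Fin (n+1) => (l : ℕ) < t), μ l with hP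
  have hP0 : P 0 = 0 := by simp [hP]
  have hPtop : P (n + 1) = (m : ℤ) := by
    rw [← hsum, hP]
    apply Finset.sum_congr _ (fun _ _ => rfl)
    rw [Finset.filter_true_of_mem (fun l _ => l.isLt)]
  have hPsucc : ∀ k : Fin (n + 1), P (k.val + 1) = P k.val + μ k := by
    intro k
    have hsplit : (univ.filter (fun l : Fin (n+1) => (l : ℕ) < k.val + 1))
        = insert k (univ.filter (fun l : Fin (n+1) => (l : ℕ) < k.val)) := by
      ext l
      simp only [Finset.mem_filter, Finset.mem_univ, true_and, Finset.mem_insert]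
      constructor
      · intro h
        rcases Nat.lt_succ_iff_lt_or_eq.mp h with h | h
        · exact Or.inr h
        · exact Or.inl (Fin.ext h)
      · rintro (rfl | h)
        · omega
        · omega
    rw [hP]
    simp only
    rw [hsplit, Finset.sum_insert (by simp)]
    ring
  have hPk : ∀ k : Fin (n+1), (∑ l ∈ univ.filter (fun l => l < k), μ l) = P k.val := by
    intro k
    apply Finset.sum_congr _ (fun _ _ => rfl)
    apply Finset.filter_congr
    intro l _
    exact Fin.lt_def
  have hPb : (∑ l ∈ univ.filter (fun l => l ≤ b), μ l) = P (b.val + 1) := by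
    apply Finset.sum_congr _ (fun _ _ => rfl)
    apply Finset.filter_congr
    intro l _
    rw [Fin.le_def, Nat.lt_succ_iff]
  set F : ℕ → RatFunc ℚ :=
    fun t => q ^ ((m : ℤ) * (if t ≤ (b : ℕ) then 1 else 0) + P t) * (q ^ (P (t+1) - P t) - 1)
    with hF
  have hstep : ∀ k : Fin (n+1),
      q ^ ((m : ℤ) * H n b k + ∑ l ∈ univ.filter (fun l => l < k), μ l) * (q ^ (μ k) - 1)
        = F k.val := by
    intro k
    rw [hF, hPk k]
    have h1 : H n b k = (if (k : ℕ) ≤ (b : ℕ) then 1 else 0) := by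
      simp only [H, Fin.le_def]
    have h2 : μ k = P (k.val + 1) - P k.val := by rw [hPsucc k]; ring
    rw [h1, h2]
  rw [Finset.sum_congr rfl (fun k _ => hstep k)]
  rw [Fin.sum_univ_eq_sum_range F (n+1)]
  have hbn : b.val + 1 ≤ n + 1 := b.isLt
  rw [Finset.range_eq_Ico, ← Finset.sum_Ico_consecutive F (Nat.zero_le (b.val+1)) hbn]
  have hfirst : ∑ t ∈ Finset.Ico 0 (b.val + 1), F t
      = q ^ (m : ℤ) * (q ^ P (b.val + 1) - q ^ P 0) := by
    have : ∀ t ∈ Finset.Ico 0 (b.val + 1), F t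
        = q ^ (m : ℤ) * (q ^ P (t+1) - q ^ P t) := by
      intro t ht
      rw [Finset.mem_Ico] at ht
      rw [hF]
      simp only
      rw [if_pos (by omega : t ≤ (b : ℕ)), mul_one, zpow_add₀ q_ne_zero]
      have hq : q ^ (P (t+1) - P t) * q ^ (P t) = q ^ (P (t+1)) := by
        rw [← zpow_add₀ q_ne_zero]; ring_nf
      linear_combination (q ^ (m : ℤ)) * hq
    rw [Finset.sum_congr rfl this, ← Finset.mul_sum]
    congr 1
    rw [← Finset.range_eq_Ico]
    exact Finset.sum_range_sub (fun t => q ^ P t) (b.val + 1)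
  have hsecond : ∑ t ∈ Finset.Ico (b.val + 1) (n + 1), F t
      = q ^ P (n + 1) - q ^ P (b.val + 1) := by
    have : ∀ t ∈ Finset.Ico (b.val + 1) (n + 1), F t = q ^ P (t+1) - q ^ P t := by
      intro t ht
      rw [Finset.mem_Ico] at ht
      rw [hF]
      simp only
      rw [if_neg (by omega : ¬ t ≤ (b : ℕ)), mul_zero, zero_add]
      have hq : q ^ (P (t+1) - P t) * q ^ (P t) = q ^ (P (t+1)) := by
        rw [← zpow_add₀ q_ne_zero]; ring_nf
      linear_combination hq
    rw [Finset.sum_congr rfl this]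
    have h2 := Finset.sum_Ico_eq_sub (fun t => q ^ P (t+1) - q ^ P t) hbn
    rw [h2, Finset.sum_range_sub (fun t => q ^ P t), Finset.sum_range_sub (fun t => q ^ P t)]
    ring
  rw [hfirst, hsecond, hP0, hPtop, hPb, zpow_zero]
  ring


lemma g_zero (n : ℕ) (b : Fin (n + 1)) (μ : Fin (n + 1) → ℤ) :
    g n 0 b μ = if (∀ k, μ k = 0) then 1 else 0 := by
  classical
  rw [g]
  have hsummand : ∀ p : Fin 1 → Fin (n+1),
      q ^ (∑ i : Fin 0, ((i : ℤ) + 1) * H n (p i.succ) (p i.castSucc)) = 1 := by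
    intro p
    rw [Finset.sum_of_isEmpty, zpow_zero]
  rw [Finset.sum_congr rfl (fun p _ => hsummand p), Finset.sum_const, nsmul_eq_mul, mul_one]
  have hcond : ∀ p : Fin 1 → Fin (n+1), ∀ k,
      (((univ.filter (fun i : Fin 0 => p i.castSucc = k)).card : ℤ) = μ k) ↔ μ k = 0 := by
    intro p k
    simp [eq_comm]
  by_cases h : ∀ k, μ k = 0
  · rw [if_pos h]
    have : (univ.filter (fun p : Fin 1 → Fin (n+1) =>
        p (Fin.last 0) = b ∧
        ∀ k, ((univ.filter (fun i : Fin 0 => p i.castSucc = k)).card : ℤ) = μ k))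
        = {fun _ => b} := by
      ext p
      simp only [Finset.mem_filter, Finset.mem_univ, true_and, Finset.mem_singleton]
      constructor
      · rintro ⟨h1, _⟩
        funext i
        rw [Subsingleton.elim i (Fin.last 0), h1]
      · rintro rfl
        exact ⟨rfl, fun k => by simp [h k]⟩
    rw [this, Finset.card_singleton, Nat.cast_one]
  · rw [if_neg h]
    push_neg at h
    obtain ⟨k₀, hk₀⟩ := h
    have : (univ.filter (fun p : Fin 1 → Fin (n+1) =>
        p (Fin.last 0) = b ∧
        ∀ k, ((univ.filter (fun i : Fin 0 => p i.castSucc = k)).card : ℤ) = μ k))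
        = ∅ := by
      ext p
      simp only [Finset.mem_filter, Finset.mem_univ, true_and, Finset.notMem_empty,
        iff_false, not_and]
      intro _ hc
      exact hk₀ ((hcond p k₀).mp (hc k₀))
    rw [this, Finset.card_empty, Nat.cast_zero]

lemma Q_sub (n j : ℕ) (k : Fin (n+1)) (μ : Fin (n+1) → ℤ)
    (hpos : ∀ l, 0 ≤ μ l) (hsum : (∑ l, μ l) = ((j:ℤ) + 1)) :
    Q n j (μ - e n k) = qfac j * qn (μ k).toNat / ∏ l, qfac (μ l).toNat := by
  classical
  by_cases hk : 1 ≤ μ k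
  · have hupd : μ - e n k = Function.update μ k (μ k - 1) := by
      funext l
      by_cases h : l = k
      · subst h; simp [e, Function.update]
      · simp [e, h, Function.update, Function.update_of_ne h]
    have hprod : (∏ l, qfac ((μ - e n k) l).toNat) * qn (μ k).toNat
        = ∏ l, qfac (μ l).toNat := by
      rw [← Finset.mul_prod_erase univ (fun l => qfac ((μ - e n k) l).toNat) (Finset.mem_univ k),
        ← Finset.mul_prod_erase univ (fun l => qfac (μ l).toNat) (Finset.mem_univ k)]
      have herase : ∏ l ∈ univ.erase k, qfac ((μ - e n k) l).toNat
          = ∏ l ∈ univ.erase k, qfac (μ l).toNat := by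
        apply Finset.prod_congr rfl
        intro l hl
        rw [Finset.mem_erase] at hl
        simp [e, hl.1]
      rw [herase]
      have hk1 : ((μ - e n k) k).toNat = (μ k - 1).toNat := by simp [e]
      have h1 : (μ k).toNat = (μ k - 1).toNat + 1 := by omega
      rw [hk1, h1]
      rw [show qfac ((μ k - 1).toNat + 1) = qfac ((μ k - 1).toNat) * qn ((μ k - 1).toNat + 1) from rfl]
      ring
    have hcond : (∀ l, 0 ≤ (μ - e n k) l) ∧ (∑ l, (μ - e n k) l) = (j : ℤ) ↔
        (∀ l, 0 ≤ μ l) ∧ (∑ l, μ l) = ((j:ℤ) + 1) := by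
      constructor
      · rintro ⟨h1, h2⟩
        simp only [Pi.sub_apply] at h2
        rw [Finset.sum_sub_distrib, sum_e] at h2
        exact ⟨hpos, by omega⟩
      · rintro ⟨h1, h2⟩
        constructor
        · intro l
          by_cases h : l = k
          · subst h; simp [e]; omega
          · simp [e, h]; exact h1 l
        · simp only [Pi.sub_apply]
          rw [Finset.sum_sub_distrib, sum_e]; omega
    rw [Q, if_pos (hcond.mpr ⟨hpos, hsum⟩), ← hprod]
    rw [mul_div_mul_right _ _ (qn_ne_zero _ (by omega))]
  · have hk0 : μ k = 0 := le_antisymm (by omega) (hpos k)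
    have : (μ - e n k) k = -1 := by simp [e, hk0]
    rw [Q, if_neg (fun hc => by have := hc.1 k; omega)]
    rw [hk0]
    show (0:RatFunc ℚ) = qfac j * qn 0 / _
    rw [show qn 0 = 0 from rfl]
    simp

lemma sum_le_lt (n : ℕ) (k : Fin (n+1)) (μ : Fin (n+1) → ℤ) :
    ∑ l ∈ univ.filter (fun l => l ≤ k), μ l
      = (∑ l ∈ univ.filter (fun l => l < k), μ l) + μ k := by
  have h : univ.filter (fun l : Fin (n+1) => l ≤ k) = insert k (univ.filter (fun l => l < k)) := by
    ext l
    simp only [Finset.mem_filter, Finset.mem_univ, true_and, Finset.mem_insert]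
    rw [le_iff_lt_or_eq]
    tauto
  rw [h, Finset.sum_insert (by simp)]
  ring

theorem g_formula (n : ℕ) (j : ℕ) (b : Fin (n+1)) (μ : Fin (n+1) → ℤ) :
    g n j b μ = q ^ (cE n μ + ∑ k ∈ univ.filter (fun k => k ≤ b), μ k) * Q n j μ := by
  induction j generalizing b μ with
  | zero =>
    rw [g_zero]
    by_cases h : ∀ k, μ k = 0
    · rw [if_pos h]
      have hc : cE n μ = 0 := Finset.sum_eq_zero (fun k _ => by rw [h k]; norm_num [f])
      have hS : ∑ k ∈ univ.filter (fun k => k ≤ b), μ k = 0 :=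
        Finset.sum_eq_zero (fun k _ => h k)
      have hQ : Q n 0 μ = 1 := by
        rw [Q, if_pos ⟨fun k => le_of_eq (h k).symm, by simp [h]⟩]
        simp [h, show qfac 0 = 1 from rfl]
      rw [hc, hS, hQ]
      norm_num
    · rw [if_neg h, Q, if_neg, mul_zero]
      rintro ⟨h1, h2⟩
      apply h
      intro k
      have h2' : ∑ l, μ l = 0 := by exact_mod_cast h2
      exact (Finset.sum_eq_zero_iff_of_nonneg (fun l _ => h1 l)).mp h2' k (Finset.mem_univ k)
  | succ j ih =>
    rw [g_succ]
    by_cases hv : (∀ l, 0 ≤ μ l) ∧ (∑ l, μ l) = (((j+1 : ℕ)) : ℤ)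
    · obtain ⟨hpos, hsum⟩ := hv
      have hsum' : (∑ l, μ l) = ((j : ℤ) + 1) := by push_cast at hsum; exact hsum
      have hV : (∏ l, qfac (μ l).toNat) ≠ 0 :=
        Finset.prod_ne_zero_iff.mpr (fun l _ => qfac_ne_zero _)
      apply mul_right_cancel₀ q_sub_one_ne_zero
      rw [Finset.sum_mul]
      have hterm : ∀ k, (q ^ (((j : ℤ) + 1) * H n b k) * g n j k (μ - e n k)) * (q - 1)
          = (q ^ (cE n μ) * (qfac j / ∏ l, qfac (μ l).toNat)) *
            (q ^ ((((j+1 : ℕ)) : ℤ) * H n b k + ∑ l ∈ univ.filter (fun l => l < k), μ l)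
              * (q ^ (μ k) - 1)) := by
        intro k
        rw [ih k (μ - e n k), Q_sub n j k μ hpos hsum', cE_sub_e]
        have hS : ∑ l ∈ univ.filter (fun l => l ≤ k), (μ - e n k) l
            = (∑ l ∈ univ.filter (fun l => l < k), μ l) + μ k - 1 := by
          simp only [Pi.sub_apply]
          rw [Finset.sum_sub_distrib]
          have h1 : ∑ l ∈ univ.filter (fun l : Fin (n+1) => l ≤ k), e n k l = 1 := by
            unfold e
            rw [Finset.sum_ite_eq' (univ.filter (fun l : Fin (n+1) => l ≤ k)) k (fun _ => (1:ℤ)),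
              if_pos (by simp)]
          rw [h1, sum_le_lt]
        rw [hS]
        have hexp : cE n μ - (μ k - 1) + ((∑ l ∈ univ.filter (fun l => l < k), μ l) + μ k - 1)
            = cE n μ + ∑ l ∈ univ.filter (fun l => l < k), μ l := by ring
        rw [hexp, q_zpow_of_nonneg (μ k) (hpos k), ← qn_mul ((μ k).toNat)]
        push_cast
        rw [zpow_add₀ q_ne_zero, zpow_add₀ q_ne_zero]
        field_simp
      rw [Finset.sum_congr rfl (fun k _ => hterm k), ← Finset.mul_sum,
        telescope n (j+1) b μ hsum]
      rw [Q, if_pos ⟨hpos, hsum⟩]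
      rw [show qfac (j+1) = qfac j * qn (j+1) from rfl]
      rw [zpow_add₀ q_ne_zero]
      have hj1 : q ^ (((j+1 : ℕ)) : ℤ) = q ^ (j+1) := by rw [zpow_natCast]
      rw [hj1, ← qn_mul (j+1)]
      field_simp
    · have hQ : Q n (j+1) μ = 0 := by
        rw [Q, if_neg]
        exact fun hc => hv ⟨hc.1, hc.2⟩
      rw [hQ, mul_zero]
      apply Finset.sum_eq_zero
      intro k _
      rw [ih k (μ - e n k)]
      have hQ0 : Q n j (μ - e n k) = 0 := by
        rw [Q, if_neg]
        rintro ⟨h1, h2⟩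
        apply hv
        constructor
        · intro l
          have hl := h1 l
          by_cases h : l = k
          · subst h
            simp only [Pi.sub_apply, e, if_pos rfl] at hl
            omega
          · simp only [Pi.sub_apply, e, if_neg h] at hl
            omega
        · simp only [Pi.sub_apply] at h2
          rw [Finset.sum_sub_distrib, sum_e] at h2
          push_cast
          omega
      rw [hQ0, mul_zero, mul_zero]

lemma filter_le_last (n : ℕ) : univ.filter (fun k : Fin (n+1) => k ≤ Fin.last n) = univ := by
  rw [Finset.filter_true_of_mem (fun k _ => Fin.le_last k)]

lemma filter_le_zero (n : ℕ) : univ.filter (fun k : Fin (n+1) => k ≤ 0) = {0} := by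
  ext k
  simp [Fin.le_zero_iff]

lemma g_last (n j : ℕ) (μ : Fin (n+1) → ℤ) :
    g n j (Fin.last n) μ = q ^ (cE n μ + ∑ k, μ k) * Q n j μ := by
  rw [g_formula, filter_le_last]

lemma g_bot (n j : ℕ) (μ : Fin (n+1) → ℤ) :
    g n j 0 μ = q ^ (cE n μ + μ 0) * Q n j μ := by
  rw [g_formula, filter_le_zero, Finset.sum_singleton]

lemma star (n j : ℕ) (hne : (0 : Fin (n+1)) ≠ Fin.last n) (μ : Fin (n+1) → ℤ) :
    (1 - q ^ (μ 0)) * Q n j μ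
      = (1 - q ^ (μ (Fin.last n) + 1)) * Q n j (μ + e n (Fin.last n) - e n 0) := by
  classical
  set ν := μ + e n (Fin.last n) - e n 0 with hν
  have hν0 : ν 0 = μ 0 - 1 := by
    simp [hν, e, hne, Ne.symm hne]
  have hνlast : ν (Fin.last n) = μ (Fin.last n) + 1 := by
    simp [hν, e, hne, Ne.symm hne]
  have hνother : ∀ l, l ≠ 0 → l ≠ Fin.last n → ν l = μ l := by
    intro l h1 h2
    simp [hν, e, h1, h2]
  have hνsum : ∑ l, ν l = ∑ l, μ l := by
    simp only [hν, Pi.sub_apply, Pi.add_apply]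
    rw [Finset.sum_sub_distrib, Finset.sum_add_distrib, sum_e, sum_e]
    ring
  by_cases hμ : (∀ l, 0 ≤ μ l) ∧ (∑ l, μ l) = (j : ℤ)
  · by_cases hc : (∀ l, 0 ≤ ν l) ∧ (∑ l, ν l) = (j : ℤ)
    · -- both valid: genuine q-binomial identity
      have ha1 : 1 ≤ μ 0 := by have := hc.1 0; omega
      have hb0 : 0 ≤ μ (Fin.last n) := hμ.1 (Fin.last n)
      rw [Q, Q, if_pos hμ, if_pos hc]
      set A := (μ 0 - 1).toNat with hA
      set B := (μ (Fin.last n)).toNat with hB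
      have hqa : q ^ (μ 0) = q ^ (A + 1) := by
        rw [q_zpow_of_nonneg _ (by omega)]
        congr 1
        omega
      have hqb : q ^ (μ (Fin.last n) + 1) = q ^ (B + 1) := by
        rw [q_zpow_of_nonneg _ (by omega)]
        congr 1
        omega
      have hsplit : ∀ x : Fin (n+1) → ℤ, (∏ l, qfac (x l).toNat)
          = qfac (x 0).toNat * (qfac (x (Fin.last n)).toNat *
            ∏ l ∈ (univ.erase 0).erase (Fin.last n), qfac (x l).toNat) := by
        intro x
        rw [← Finset.mul_prod_erase univ (fun l => qfac (x l).toNat) (Finset.mem_univ 0)]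
        try rw [← Finset.mul_prod_erase (univ.erase 0) (fun l => qfac (x l).toNat)
            (Finset.mem_erase.mpr ⟨Ne.symm hne, Finset.mem_univ _⟩)]
      have hrest : ∏ l ∈ (univ.erase 0).erase (Fin.last n), qfac (ν l).toNat
          = ∏ l ∈ (univ.erase 0).erase (Fin.last n), qfac (μ l).toNat := by
        apply Finset.prod_congr rfl
        intro l hl
        rw [Finset.mem_erase, Finset.mem_erase] at hl
        rw [hνother l hl.2.1 hl.1]
      have hμ0 : (μ 0).toNat = A + 1 := by omega
      have hνlast' : (ν (Fin.last n)).toNat = B + 1 := by rw [hνlast]; omega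
      have hν0' : (ν 0).toNat = A := by rw [hν0]
      rw [hsplit μ, hsplit ν, hrest, hμ0, hνlast', hν0', hqa, hqb, ← hB]
      set R := ∏ l ∈ (univ.erase 0).erase (Fin.last n), qfac (μ l).toNat with hR
      have hRne : R ≠ 0 := Finset.prod_ne_zero_iff.mpr (fun l _ => qfac_ne_zero _)
      have hfA : qfac (A + 1) = qfac A * qn (A + 1) := rfl
      have hfB : qfac (B + 1) = qfac B * qn (B + 1) := rfl
      rw [hfA, hfB]
      have e1 := qn_mul (A + 1)
      have e2 := qn_mul (B + 1)
      have h1 : qfac A ≠ 0 := qfac_ne_zero A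
      have h2 : qfac B ≠ 0 := qfac_ne_zero B
      have h3 : qn (A + 1) ≠ 0 := qn_ne_zero _ (Nat.succ_ne_zero A)
      have h4 : qn (B + 1) ≠ 0 := qn_ne_zero _ (Nat.succ_ne_zero B)
      field_simp
      linear_combination (qfac j * qn (B+1)) * e1
        - (qfac j * qn (A+1)) * e2
    · -- μ valid, ν invalid : forces μ 0 = 0
      have ha : μ 0 = 0 := by
        by_contra ha
        apply hc
        refine ⟨fun l => ?_, by rw [hνsum]; exact hμ.2⟩
        by_cases h1 : l = 0
        · subst h1; have := hμ.1 0; omega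
        · by_cases h2 : l = Fin.last n
          · subst h2; have := hμ.1 (Fin.last n); omega
          · rw [hνother l h1 h2]; exact hμ.1 l
      have hQν : Q n j ν = 0 := by rw [Q]; exact if_neg hc
      rw [ha, hQν]
      norm_num
  · by_cases hc : (∀ l, 0 ≤ ν l) ∧ (∑ l, ν l) = (j : ℤ)
    · -- ν valid, μ invalid : forces μ last = -1
      have hb : μ (Fin.last n) = -1 := by
        by_contra hb
        apply hμ
        refine ⟨fun l => ?_, by rw [← hνsum]; exact hc.2⟩
        by_cases h1 : l = 0
        · subst h1; have := hc.1 0; omega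
        · by_cases h2 : l = Fin.last n
          · subst h2; have := hc.1 (Fin.last n); omega
          · rw [← hνother l h1 h2]; exact hc.1 l
      rw [hb, Q, if_neg hμ]
      norm_num
    · rw [Q, Q, if_neg hμ, if_neg hc]
      ring

lemma final_alg (c a b jz : ℤ) (X Y : RatFunc ℚ)
    (hstar : (1 - q ^ a) * X = (1 - q ^ (b + 1)) * Y) :
    q ^ (b - a + 1) * (q ^ (c + jz) * X)
      + q ^ (jz + (b - a) + 2) * (q ^ (c + (b - a + 1) + (a - 1)) * Y)
    = q ^ (c + (b - a + 1) + jz) * Y + q ^ (jz + 1) * (q ^ (c + b) * X) := by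
  set A1 := c + jz + (b - a) + 1 with hA1
  have k1 : q ^ (b - a + 1) * q ^ (c + jz) = q ^ A1 := by
    rw [← zpow_add₀ q_ne_zero]; congr 1; ring
  have k2 : q ^ (jz + (b - a) + 2) * q ^ (c + (b - a + 1) + (a - 1)) = q ^ A1 * q ^ (b + 1) := by
    rw [← zpow_add₀ q_ne_zero, ← zpow_add₀ q_ne_zero]; congr 1; ring
  have k3 : q ^ (c + (b - a + 1) + jz) = q ^ A1 := by congr 1; ring
  have k4 : q ^ (jz + 1) * q ^ (c + b) = q ^ A1 * q ^ a := by
    rw [← zpow_add₀ q_ne_zero, ← zpow_add₀ q_ne_zero]; congr 1; ring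
  rw [← mul_assoc, ← mul_assoc, k1, k2, k3, ← mul_assoc, k4]
  linear_combination (q ^ A1) * hstar

end S10

open S10

/-- the `m = 1` case of the Weyl-reflection identity for the affine index
`i = 0` and the element `b = n` (with `φ_0(n) = 1`, `f_0(n) = 0`): with `d = μ_n - μ_0`,
`q^{d+1}·g_j(n,μ) + q^{j+d+2}·g_j(0, μ+e_n-e_0)
  = g_j(n, μ+(d+1)(e_0-e_n)) + q^{j+1}·g_j(0, μ+d(e_0-e_n))`. -/
theorem statement10 (n : ℕ) (hn : 1 ≤ n) (j : ℕ) (μ : Fin (n + 1) → ℤ) :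
    q ^ (μ (Fin.last n) - μ 0 + 1) * g n j (Fin.last n) μ +
      q ^ ((j : ℤ) + (μ (Fin.last n) - μ 0) + 2) *
        g n j 0 (μ + e n (Fin.last n) - e n 0) =
    g n j (Fin.last n)
        (μ + (μ (Fin.last n) - μ 0 + 1) • (e n 0 - e n (Fin.last n))) +
      q ^ ((j : ℤ) + 1) *
        g n j 0 (μ + (μ (Fin.last n) - μ 0) • (e n 0 - e n (Fin.last n))) := by
  classical
  have hne : (0 : Fin (n + 1)) ≠ Fin.last n := by
    intro h
    have h2 : ((0 : Fin (n + 1)) : ℕ) = n := by rw [h, Fin.val_last]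
    simp at h2
    omega
  set σ : Equiv.Perm (Fin (n + 1)) := Equiv.swap 0 (Fin.last n) with hσ
  set ν := μ + e n (Fin.last n) - e n 0 with hν
  have hσ0 : σ 0 = Fin.last n := Equiv.swap_apply_left _ _
  have hσl : σ (Fin.last n) = 0 := Equiv.swap_apply_right _ _
  have hν0 : ν 0 = μ 0 - 1 := by simp [hν, e, hne, Ne.symm hne]
  have hswap2 : μ + (μ (Fin.last n) - μ 0) • (e n 0 - e n (Fin.last n)) = μ ∘ σ := by
    funext l
    simp only [Pi.add_apply, Pi.smul_apply, Pi.sub_apply, smul_eq_mul, Function.comp_apply]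
    by_cases h1 : l = 0
    · subst h1
      rw [hσ0]
      simp [e, hne, Ne.symm hne]
      try ring
    · by_cases h2 : l = Fin.last n
      · subst h2
        rw [hσl]
        simp [e, hne, Ne.symm hne]
        try ring
      · rw [Equiv.swap_apply_of_ne_of_ne h1 h2]
        simp [e, h1, h2]
  have hswap1 : μ + (μ (Fin.last n) - μ 0 + 1) • (e n 0 - e n (Fin.last n)) = ν ∘ σ := by
    funext l
    simp only [Pi.add_apply, Pi.smul_apply, Pi.sub_apply, smul_eq_mul, Function.comp_apply]
    by_cases h1 : l = 0
    · subst h1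
      rw [hσ0]
      simp [hν, e, hne, Ne.symm hne]
      try ring
    · by_cases h2 : l = Fin.last n
      · subst h2
        rw [hσl]
        simp [hν, e, hne, Ne.symm hne]
        try ring
      · rw [Equiv.swap_apply_of_ne_of_ne h1 h2]
        simp [hν, e, h1, h2]
  rw [hswap1, hswap2]
  rw [g_last n j μ, g_bot n j ν, g_last n j (ν ∘ σ), g_bot n j (μ ∘ σ)]
  have hcE2 : cE n (ν ∘ σ) = cE n ν := cE_comp_perm n σ ν
  have hQ2 : Q n j (ν ∘ σ) = Q n j ν := Q_comp_perm n j σ ν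
  have hcE4 : cE n (μ ∘ σ) = cE n μ := cE_comp_perm n σ μ
  have hQ4 : Q n j (μ ∘ σ) = Q n j μ := Q_comp_perm n j σ μ
  have hsum2 : ∑ k, (ν ∘ σ) k = ∑ k, ν k := by
    simpa using Equiv.sum_comp σ (fun k => ν k)
  have h40 : (μ ∘ σ) 0 = μ (Fin.last n) := by rw [Function.comp_apply, hσ0]
  rw [hcE2, hQ2, hcE4, hQ4, hsum2, h40]
  have hνsum : ∑ l, ν l = ∑ l, μ l := by
    simp only [hν, Pi.sub_apply, Pi.add_apply]
    rw [Finset.sum_sub_distrib, Finset.sum_add_distrib, sum_e, sum_e]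
    ring
  have hcEν : cE n ν = cE n μ + (μ (Fin.last n) - μ 0 + 1) := by
    rw [hν, cE_sub_e, cE_add_e]
    have : (μ + e n (Fin.last n)) 0 = μ 0 := by simp [e, hne]
    rw [this]
    ring
  by_cases hT : (∑ k, μ k) = (j : ℤ)
  · rw [hνsum, hT, hcEν, hν0]
    exact final_alg (cE n μ) (μ 0) (μ (Fin.last n)) (j : ℤ) (Q n j μ) (Q n j ν)
      (star n j hne μ)
  · have hQμ : Q n j μ = 0 := by rw [Q]; exact if_neg (fun hc => hT hc.2)
    have hQν : Q n j ν = 0 := by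
      rw [Q]; exact if_neg (fun hc => hT (by rw [← hνsum]; exact hc.2))
    rw [hQμ, hQν]
    ring

end
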